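/- Let (p̂_n)_{n≥1} be the real sequence defined by p̂_1 = 1 and p̂_n = (1/(n−1)) Σ_{j=1}^{n−1} (1 − p̂_j) p̂_{n−j} for n ≥ 2. Then Σ_{k=1}^∞ p̂_k / (k(k+1)) = ∫₀¹ 1/(1 − log x) dx (the Euler–Gompertz constant). -/

import Mathlib

open MeasureTheory ProbabilityTheory Filter Asymptotics

open Finset Topology


lemma rrt_bounds (p : ℕ → ℝ) (h1 : p 1 = 1)
    (hrec : ∀ n : ℕ, 2 ≤ n →
      p n = (1 / ((n : ℝ) - 1)) * ∑ j ∈ Finset.Icc 1 (n - 1), (1 - p j) * p (n - j)) :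
    ∀ n : ℕ, 1 ≤ n → 0 ≤ p n ∧ p n ≤ 1 := by
  intro n
  induction n using Nat.strong_induction_on with
  | _ n ih =>
    intro hn
    rcases eq_or_lt_of_le hn with h | h
    · simp [← h, h1]
    · have h2 : 2 ≤ n := h
      have hterm : ∀ j ∈ Finset.Icc 1 (n-1), 0 ≤ (1 - p j) * p (n - j) ∧ (1 - p j) * p (n - j) ≤ 1 := by
        intro j hj
        simp only [Finset.mem_Icc] at hj
        have hj1 := ih j (by omega) hj.1
        have hj2 := ih (n - j) (by omega) (by omega)
        constructor
        · exact mul_nonneg (by linarith [hj1.2]) hj2.1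
        · calc (1 - p j) * p (n - j) ≤ 1 * 1 := by
                apply mul_le_mul (by linarith [hj1.1]) hj2.2 hj2.1 (by norm_num)
          _ = 1 := by ring
      have hsum0 : 0 ≤ ∑ j ∈ Finset.Icc 1 (n-1), (1 - p j) * p (n - j) :=
        Finset.sum_nonneg fun j hj => (hterm j hj).1
      have hsum1 : ∑ j ∈ Finset.Icc 1 (n-1), (1 - p j) * p (n - j) ≤ (n : ℝ) - 1 := by
        calc ∑ j ∈ Finset.Icc 1 (n-1), (1 - p j) * p (n - j)
            ≤ ∑ j ∈ Finset.Icc 1 (n-1), 1 := Finset.sum_le_sum fun j hj => (hterm j hj).2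
          _ = ((n:ℕ) - 1 : ℕ) := by simp [Nat.card_Icc]
          _ = (n : ℝ) - 1 := by push_cast [Nat.cast_sub (by omega : 1 ≤ n)]; ring_nf
      have hpos : (0:ℝ) < (n:ℝ) - 1 := by
        have : (2:ℝ) ≤ n := by exact_mod_cast h2
        linarith
      rw [hrec n h2]
      constructor
      · positivity
      · rw [div_mul_eq_mul_div, one_mul, div_le_one hpos]
        exact hsum1

lemma rrt_key (p : ℕ → ℝ)
    (hrec : ∀ n : ℕ, 2 ≤ n →
      p n = (1 / ((n : ℝ) - 1)) * ∑ j ∈ Finset.Icc 1 (n - 1), (1 - p j) * p (n - j)) (k : ℕ) :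
    ((k:ℝ)+1) * p (k+2) =
      (∑ j ∈ range (k+1), p (j+1)) - ∑ j ∈ range (k+1), p (j+1) * p (k-j+1) := by
  have h := hrec (k+2) (by omega)
  have hne : ((k:ℝ)+1) ≠ 0 := by positivity
  have hcast : ((k+2 : ℕ) : ℝ) - 1 = (k:ℝ)+1 := by push_cast; ring
  have h2 : ((k:ℝ)+1) * p (k+2) = ∑ j ∈ Finset.Icc 1 (k+1), (1 - p j) * p (k+2-j) := by
    rw [h, hcast]
    field_simp
    rfl
  rw [h2]
  have hreindex : ∑ j ∈ Finset.Icc 1 (k+1), (1 - p j) * p (k+2-j)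
      = ∑ i ∈ range (k+1), (1 - p (i+1)) * p (k-i+1) := by
    apply Finset.sum_nbij' (fun j => j - 1) (fun i => i + 1)
    · intro a ha; simp only [Finset.mem_Icc] at ha; simp [Finset.mem_range]; omega
    · intro a ha; simp only [Finset.mem_range] at ha; simp [Finset.mem_Icc]; omega
    · intro a ha; simp only [Finset.mem_Icc] at ha; omega
    · intro a ha; rfl
    · intro a ha
      simp only [Finset.mem_Icc] at ha
      have h1 : a - 1 + 1 = a := by omega
      have h3 : k - (a-1) + 1 = k + 2 - a := by omega
      rw [h1, h3]
  rw [hreindex]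
  have hsplit : ∑ i ∈ range (k+1), (1 - p (i+1)) * p (k-i+1)
      = (∑ i ∈ range (k+1), p (k-i+1)) - ∑ i ∈ range (k+1), p (i+1) * p (k-i+1) := by
    rw [← Finset.sum_sub_distrib]
    congr 1; ext i; ring
  rw [hsplit]
  congr 1
  rw [← Finset.sum_range_reflect]
  apply Finset.sum_congr rfl
  intro i hi
  simp only [Finset.mem_range] at hi
  congr 1
  omega

section
variable (p : ℕ → ℝ)

-- summability of coefficients bounded by 1 against geometric
lemma rrt_sum_aux (hq : ∀ k : ℕ, |p (k+1)| ≤ 1) {t : ℝ} (ht : |t| < 1) :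
    Summable (fun k : ℕ => p (k+1) * t^k) := by
  apply Summable.of_norm_bounded (g := fun k => |t|^k)
    (summable_geometric_of_lt_one (abs_nonneg t) ht)
  intro k
  rw [Real.norm_eq_abs, abs_mul, abs_pow]
  exact mul_le_of_le_one_left (by positivity) (hq k)

lemma rrt_sumD_aux (hq : ∀ k : ℕ, |p (k+1)| ≤ 1) {t : ℝ} (ht : |t| < 1) :
    Summable (fun k : ℕ => ((k:ℝ)+1) * p (k+2) * t^k) := by
  have h1 : Summable (fun k : ℕ => ((k:ℝ)+1) * |t|^k) := by
    have := summable_pow_mul_geometric_of_norm_lt_one 1 (by rwa [Real.norm_eq_abs, abs_abs] : ‖|t|‖ < 1)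
    have h2 := this.add (summable_geometric_of_lt_one (abs_nonneg t) ht)
    apply h2.congr
    intro b
    push_cast [pow_one]
    ring
  apply Summable.of_norm_bounded h1
  intro k
  rw [Real.norm_eq_abs, abs_mul, abs_mul, abs_pow]
  have : |(k:ℝ)+1| = (k:ℝ)+1 := abs_of_nonneg (by positivity)
  rw [this]
  calc ((k:ℝ)+1) * |p (k+2)| * |t|^k ≤ ((k:ℝ)+1) * 1 * |t|^k := by
        gcongr
        exact hq (k+1)
    _ = ((k:ℝ)+1) * |t|^k := by ring

end

lemma rrt_hasDerivAt (p : ℕ → ℝ) (hq : ∀ k : ℕ, |p (k+1)| ≤ 1) {y : ℝ}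
    (hy : y ∈ Set.Ioo (0:ℝ) 1) :
    HasDerivAt (fun t : ℝ => ∑' k : ℕ, p (k+1) * t^k)
      (∑' k : ℕ, ((k:ℝ)+1) * p (k+2) * y^k) y := by
  obtain ⟨hy0, hy1⟩ := hy
  set r : ℝ := (1+y)/2 with hr
  have hr0 : 0 < r := by positivity
  have hr1 : r < 1 := by simp only [hr]; linarith
  have hyr : y < r := by simp only [hr]; linarith
  have hu : Summable (fun n : ℕ => (n:ℝ) * r^(n-1)) := by
    have h := summable_pow_mul_geometric_of_norm_lt_one 1 (by rwa [Real.norm_eq_abs, abs_of_pos hr0] : ‖r‖ < 1)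
    apply (h.mul_left r⁻¹).congr
    intro n
    match n with
    | 0 => simp
    | Nat.succ m =>
      field_simp
      rw [pow_succ]
      push_cast
      ring
  have key : HasDerivAt (fun t : ℝ => ∑' k : ℕ, p (k+1) * t^k)
      (∑' k : ℕ, p (k+1) * ((k:ℝ) * y^(k-1))) y := by
    apply hasDerivAt_tsum_of_isPreconnected hu (isOpen_Ioo (a := -r) (b := r))
      (isPreconnected_Ioo) (fun n x _ => (hasDerivAt_pow n x).const_mul (p (n+1)))
      _ (Set.mem_Ioo.2 ⟨by linarith, hr0⟩) _ (Set.mem_Ioo.2 ⟨by linarith, hyr⟩)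
    · intro n x hx
      have hxr : |x| ≤ r := by
        rw [abs_le]
        exact ⟨hx.1.le, hx.2.le⟩
      rw [Real.norm_eq_abs, abs_mul, abs_mul, abs_pow, Nat.abs_cast]
      calc |p (n+1)| * ((n:ℝ) * |x|^(n-1)) ≤ 1 * ((n:ℝ) * r^(n-1)) := by
            gcongr
            · exact hq n
        _ = (n:ℝ) * r^(n-1) := by ring
    · exact rrt_sum_aux p hq (by simp [abs_of_nonneg, hr0.le] : |(0:ℝ)| < 1)
  have hsd : Summable (fun k : ℕ => p (k+1) * ((k:ℝ) * y^(k-1))) := by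
    apply Summable.of_norm_bounded (g := fun n : ℕ => (n:ℝ) * r^(n-1)) hu
    intro n
    rw [Real.norm_eq_abs, abs_mul, abs_mul, abs_pow, Nat.abs_cast]
    calc |p (n+1)| * ((n:ℝ) * |y|^(n-1)) ≤ 1 * ((n:ℝ) * r^(n-1)) := by
          gcongr
          · exact hq n
          · rw [abs_of_pos hy0]; exact hyr.le
      _ = (n:ℝ) * r^(n-1) := by ring
  convert key using 1
  rw [Summable.tsum_eq_zero_add hsd]
  simp only [Nat.cast_zero, zero_mul, mul_zero, zero_add]
  apply tsum_congr
  intro k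
  simp only [Nat.add_sub_cancel]
  push_cast
  ring

lemma rrt_aux2 {c : ℕ → ℝ} (hc : ∀ n, |c n| ≤ (n:ℝ)+1) {t : ℝ} (ht : |t| < 1) :
    Summable fun n : ℕ => c n * t^n := by
  have h1 : Summable (fun k : ℕ => ((k:ℝ)+1) * |t|^k) := by
    have h := summable_pow_mul_geometric_of_norm_lt_one 1
      (by rwa [Real.norm_eq_abs, abs_abs] : ‖|t|‖ < 1)
    have h2 := h.add (summable_geometric_of_lt_one (abs_nonneg t) ht)
    apply h2.congr
    intro b
    push_cast [pow_one]
    ring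
  apply Summable.of_norm_bounded h1
  intro n
  rw [Real.norm_eq_abs, abs_mul, abs_pow]
  gcongr
  exact hc n

lemma rrt_ode (p : ℕ → ℝ)
    (hrec : ∀ n : ℕ, 2 ≤ n →
      p n = (1 / ((n : ℝ) - 1)) * ∑ j ∈ Finset.Icc 1 (n - 1), (1 - p j) * p (n - j))
    (hq01 : ∀ k : ℕ, 0 ≤ p (k+1) ∧ p (k+1) ≤ 1) {y : ℝ} (hy : y ∈ Set.Ioo (0:ℝ) 1) :
    ∑' k : ℕ, ((k:ℝ)+1) * p (k+2) * y^k
      = (∑' k : ℕ, p (k+1) * y^k) * (1-y)⁻¹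
        - (∑' k : ℕ, p (k+1) * y^k) * (∑' k : ℕ, p (k+1) * y^k) := by
  obtain ⟨hy0, hy1⟩ := hy
  have hq : ∀ k : ℕ, |p (k+1)| ≤ 1 := fun k => abs_le.2 ⟨by linarith [(hq01 k).1], (hq01 k).2⟩
  have hyabs : |y| < 1 := by rw [abs_of_pos hy0]; exact hy1
  have hfn : Summable fun k : ℕ => ‖p (k+1) * y^k‖ := by
    apply Summable.of_nonneg_of_le (fun k => norm_nonneg _)
      (fun k => ?_) (summable_geometric_of_lt_one (abs_nonneg y) hyabs)
    rw [Real.norm_eq_abs, abs_mul, abs_pow]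
    exact mul_le_of_le_one_left (by positivity) (hq k)
  have hgn : Summable fun k : ℕ => ‖y^k‖ := by
    apply Summable.congr (summable_geometric_of_lt_one (abs_nonneg y) hyabs)
    intro k
    rw [Real.norm_eq_abs, abs_pow]
  have hgeo : ∑' n : ℕ, y^n = (1-y)⁻¹ := tsum_geometric_of_lt_one hy0.le hy1
  have C1 : (∑' k : ℕ, p (k+1) * y^k) * (1-y)⁻¹
      = ∑' n : ℕ, (∑ j ∈ Finset.range (n+1), p (j+1)) * y^n := by
    rw [← hgeo, tsum_mul_tsum_eq_tsum_sum_antidiagonal_of_summable_norm hfn hgn]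
    apply tsum_congr
    intro n
    rw [Finset.Nat.sum_antidiagonal_eq_sum_range_succ_mk, Finset.sum_mul]
    apply Finset.sum_congr rfl
    intro j hj
    simp only [Finset.mem_range] at hj
    rw [mul_assoc, ← pow_add]
    congr 2
    omega
  have C2 : (∑' k : ℕ, p (k+1) * y^k) * (∑' k : ℕ, p (k+1) * y^k)
      = ∑' n : ℕ, (∑ j ∈ Finset.range (n+1), p (j+1) * p (n-j+1)) * y^n := by
    rw [tsum_mul_tsum_eq_tsum_sum_antidiagonal_of_summable_norm hfn hfn]
    apply tsum_congr
    intro n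
    rw [Finset.Nat.sum_antidiagonal_eq_sum_range_succ_mk, Finset.sum_mul]
    apply Finset.sum_congr rfl
    intro j hj
    simp only [Finset.mem_range] at hj
    rw [mul_mul_mul_comm, ← pow_add]
    congr 2
    omega
  have SA : Summable fun n : ℕ => (∑ j ∈ Finset.range (n+1), p (j+1)) * y^n := by
    apply rrt_aux2 _ hyabs
    intro n
    calc |∑ j ∈ Finset.range (n+1), p (j+1)| ≤ ∑ j ∈ Finset.range (n+1), |p (j+1)| :=
          Finset.abs_sum_le_sum_abs _ _
      _ ≤ ∑ j ∈ Finset.range (n+1), 1 := Finset.sum_le_sum fun j _ => hq j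
      _ = (n:ℝ)+1 := by simp
  have SB : Summable fun n : ℕ => (∑ j ∈ Finset.range (n+1), p (j+1) * p (n-j+1)) * y^n := by
    apply rrt_aux2 _ hyabs
    intro n
    calc |∑ j ∈ Finset.range (n+1), p (j+1) * p (n-j+1)|
        ≤ ∑ j ∈ Finset.range (n+1), |p (j+1) * p (n-j+1)| := Finset.abs_sum_le_sum_abs _ _
      _ ≤ ∑ j ∈ Finset.range (n+1), 1 := by
          apply Finset.sum_le_sum
          intro j _
          rw [abs_mul]
          exact mul_le_one₀ (hq j) (abs_nonneg _) (hq _)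
      _ = (n:ℝ)+1 := by simp
  rw [C1, C2, ← Summable.tsum_sub SA SB]
  apply tsum_congr
  intro k
  rw [rrt_key p hrec k, sub_mul]

lemma rrt_genfun (p : ℕ → ℝ) (h1 : p 1 = 1)
    (hrec : ∀ n : ℕ, 2 ≤ n →
      p n = (1 / ((n : ℝ) - 1)) * ∑ j ∈ Finset.Icc 1 (n - 1), (1 - p j) * p (n - j))
    (hq01 : ∀ k : ℕ, 0 ≤ p (k+1) ∧ p (k+1) ≤ 1) :
    ∀ t ∈ Set.Ioo (0:ℝ) 1,
      (1 - t) * (∑' k : ℕ, p (k+1) * t^k) = (1 - Real.log (1-t))⁻¹ := by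
  have hq : ∀ k : ℕ, |p (k+1)| ≤ 1 := fun k => abs_le.2 ⟨by linarith [(hq01 k).1], (hq01 k).2⟩
  set Q : ℝ → ℝ := fun t => ∑' k : ℕ, p (k+1) * t^k with hQ
  have habs : ∀ t ∈ Set.Ioo (0:ℝ) 1, |t| < 1 := fun t ht => by
    rw [abs_of_pos ht.1]; exact ht.2
  have hQlb : ∀ t ∈ Set.Ioo (0:ℝ) 1, 1 ≤ Q t := by
    intro t ht
    have h := Summable.le_tsum (rrt_sum_aux p hq (habs t ht)) 0
      (fun j _ => mul_nonneg (hq01 j).1 (pow_nonneg ht.1.le j))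
    simpa [h1] using h
  have hQub : ∀ t ∈ Set.Ioo (0:ℝ) 1, Q t ≤ (1-t)⁻¹ := by
    intro t ht
    rw [← tsum_geometric_of_lt_one ht.1.le ht.2]
    apply Summable.tsum_le_tsum _ (rrt_sum_aux p hq (habs t ht))
      (summable_geometric_of_lt_one ht.1.le ht.2)
    intro k
    exact mul_le_of_le_one_left (pow_nonneg ht.1.le k) (hq01 k).2
  have hQpos : ∀ t ∈ Set.Ioo (0:ℝ) 1, 0 < Q t := fun t ht => lt_of_lt_of_le one_pos (hQlb t ht)
  have hprod_pos : ∀ t ∈ Set.Ioo (0:ℝ) 1, 0 < (1-t) * Q t := fun t ht =>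
    mul_pos (by linarith [ht.2]) (hQpos t ht)
  have hprod_le1 : ∀ t ∈ Set.Ioo (0:ℝ) 1, (1-t) * Q t ≤ 1 := by
    intro t ht
    have h1t : (0:ℝ) < 1 - t := by linarith [ht.2]
    calc (1-t) * Q t ≤ (1-t) * (1-t)⁻¹ := by
          exact mul_le_mul_of_nonneg_left (hQub t ht) h1t.le
      _ = 1 := mul_inv_cancel₀ (ne_of_gt h1t)
  have hprod_lb : ∀ t ∈ Set.Ioo (0:ℝ) 1, 1 - t ≤ (1-t) * Q t := by
    intro t ht
    have h1t : (0:ℝ) < 1 - t := by linarith [ht.2]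
    nlinarith [hQlb t ht]
  set H : ℝ → ℝ := fun t => ((1-t) * Q t)⁻¹ + Real.log (1-t) with hHdef
  have hHd : ∀ y ∈ Set.Ioo (0:ℝ) 1, HasDerivAt H 0 y := by
    intro y hy
    have h1y : (0:ℝ) < 1 - y := by linarith [hy.2]
    have hd1 : HasDerivAt (fun t : ℝ => (1-t) * Q t)
        ((-1) * Q y + (1-y) * (∑' k : ℕ, ((k:ℝ)+1) * p (k+2) * y^k)) y := by
      exact HasDerivAt.mul ((hasDerivAt_id y).const_sub 1) (rrt_hasDerivAt p hq hy)
    have hne : (1-y) * Q y ≠ 0 := ne_of_gt (hprod_pos y hy)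
    have hd2 := hd1.inv hne
    have hd3 : HasDerivAt (fun t : ℝ => Real.log (1-t)) ((-1) / (1-y)) y :=
      HasDerivAt.log ((hasDerivAt_id y).const_sub 1) (ne_of_gt h1y)
    have := hd2.add hd3
    refine this.congr_deriv ?_
    rw [rrt_ode p hrec hq01 hy]
    have hQne : Q y ≠ 0 := ne_of_gt (hQpos y hy)
    field_simp
    ring
  have hconst : ∀ a ∈ Set.Ioo (0:ℝ) 1, ∀ b ∈ Set.Ioo (0:ℝ) 1, a < b → H a = H b := by
    intro a ha b hb hab
    have hcont : ContinuousOn H (Set.Icc a b) := by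
      intro x hx
      have hx' : x ∈ Set.Ioo (0:ℝ) 1 := ⟨lt_of_lt_of_le ha.1 hx.1, lt_of_le_of_lt hx.2 hb.2⟩
      exact (hHd x hx').continuousAt.continuousWithinAt
    obtain ⟨c, hc, hslope⟩ := exists_hasDerivAt_eq_slope H (fun _ => (0:ℝ)) hab hcont
      (fun x hx => hHd x ⟨lt_trans ha.1 hx.1, lt_trans hx.2 hb.2⟩)
    have h0 : (H b - H a) / (b - a) = 0 := hslope.symm
    rw [div_eq_zero_iff] at h0
    rcases h0 with h | h
    · linarith
    · linarith
  have hH1 : ∀ t ∈ Set.Ioo (0:ℝ) 1, H t = 1 := by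
    intro t ht
    set u : ℕ → ℝ := fun m => ((m:ℝ)+2)⁻¹ with hu
    have hum : ∀ m : ℕ, u m ∈ Set.Ioo (0:ℝ) 1 := by
      intro m
      constructor
      · positivity
      · rw [inv_lt_one_iff₀]
        right
        have : (0:ℝ) ≤ (m:ℝ) := Nat.cast_nonneg m
        linarith
    have hu0 : Tendsto u atTop (𝓝 0) := by
      apply Filter.Tendsto.inv_tendsto_atTop
      exact tendsto_atTop_add_const_right atTop 2 tendsto_natCast_atTop_atTop
    have h1u : Tendsto (fun m => 1 - u m) atTop (𝓝 1) := by
      have := tendsto_const_nhds (x := (1:ℝ)) (f := atTop (α := ℕ))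
      simpa using this.sub hu0
    have hlog : Tendsto (fun m => Real.log (1 - u m)) atTop (𝓝 0) := by
      have := (Real.continuousAt_log one_ne_zero).tendsto.comp h1u
      simpa [Function.comp_def] using this
    have hinv : Tendsto (fun m => (1 - u m)⁻¹) atTop (𝓝 1) := by
      have := ((continuousAt_inv₀ one_ne_zero).tendsto).comp h1u
      simpa [Function.comp_def] using this
    have hHt : ∀ m : ℕ, H t = H (u m) := by
      intro m
      rcases lt_trichotomy t (u m) with h | h | h
      · exact hconst t ht (u m) (hum m) h
      · rw [h]
      · exact (hconst (u m) (hum m) t ht h).symm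
    have hlow : ∀ m : ℕ, 1 + Real.log (1 - u m) ≤ H t := by
      intro m
      rw [hHt m]
      have h1 : ((1 - u m) * Q (u m))⁻¹ ≥ 1 := by
        rw [ge_iff_le, one_le_inv_iff₀]
        exact ⟨hprod_pos (u m) (hum m), hprod_le1 (u m) (hum m)⟩
      simp only [hHdef]
      linarith
    have hhigh : ∀ m : ℕ, H t ≤ (1 - u m)⁻¹ + Real.log (1 - u m) := by
      intro m
      rw [hHt m]
      have h2 : ((1 - u m) * Q (u m))⁻¹ ≤ (1 - u m)⁻¹ := by
        apply inv_anti₀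
        · linarith [(hum m).2]
        · exact hprod_lb (u m) (hum m)
      simp only [hHdef]
      linarith
    have hlim1 : Tendsto (fun m => 1 + Real.log (1 - u m)) atTop (𝓝 1) := by
      have := (tendsto_const_nhds (x := (1:ℝ)) (f := atTop (α := ℕ))).add hlog
      simpa using this
    have hlim2 : Tendsto (fun m => (1 - u m)⁻¹ + Real.log (1 - u m)) atTop (𝓝 1) := by
      have := hinv.add hlog
      simpa using this
    have hge : 1 ≤ H t := le_of_tendsto_of_tendsto' hlim1 tendsto_const_nhds hlow
    have hle : H t ≤ 1 := le_of_tendsto_of_tendsto' tendsto_const_nhds hlim2 hhigh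
    linarith
  intro t ht
  have h1t : (0:ℝ) < 1 - t := by linarith [ht.2]
  have hlogneg : Real.log (1-t) < 0 := by
    apply Real.log_neg h1t
    linarith [ht.1]
  have hHt := hH1 t ht
  simp only [hHdef] at hHt
  have hinv_eq : ((1-t) * Q t)⁻¹ = 1 - Real.log (1-t) := by linarith
  rw [← hinv_eq, inv_inv]

lemma rrt_integral (p : ℕ → ℝ) (k : ℕ) :
    ∫ t in Set.Ioo (0:ℝ) 1, p (k+1) * ((1-t) * t^k)
      = p (k+1) / (((k:ℝ)+1) * ((k:ℝ)+2)) := by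
  rw [← MeasureTheory.integral_Ioc_eq_integral_Ioo,
    ← intervalIntegral.integral_of_le zero_le_one,
    intervalIntegral.integral_const_mul]
  have hEq : ∫ t in (0:ℝ)..1, (1-t) * t^k = ∫ t in (0:ℝ)..1, (t^k - t^(k+1)) := by
    apply intervalIntegral.integral_congr
    intro t _
    ring
  rw [hEq, intervalIntegral.integral_sub (intervalIntegral.intervalIntegrable_pow k) (intervalIntegral.intervalIntegrable_pow (k+1)),
    integral_pow, integral_pow]
  have hk1 : ((k:ℝ)+1) ≠ 0 := by positivity
  have hk2 : ((k:ℝ)+2) ≠ 0 := by positivity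
  rw [one_pow, one_pow, zero_pow (by omega : k+1 ≠ 0), zero_pow (by omega : k+1+1 ≠ 0)]
  have h : (1-(0:ℝ))/((k:ℝ)+1) - (1-(0:ℝ))/((k:ℝ)+1+1) = 1/(((k:ℝ)+1)*((k:ℝ)+2)) := by
    have h3 : ((k:ℝ)+1+1) ≠ 0 := by positivity
    field_simp
    ring
  push_cast
  rw [h, mul_one_div]

/-- For the sequence `p̂` defined by `p̂₁ = 1` and
`p̂ₙ = (1/(n-1)) Σ_{j=1}^{n-1} (1 - p̂ⱼ) p̂_{n-j}` for `n ≥ 2`, we have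
`Σ_{k≥1} p̂ₖ/(k(k+1)) = ∫₀¹ 1/(1 - log x) dx`, the Euler–Gompertz constant. -/
theorem rrt_mean_constant_eq_gompertz (p : ℕ → ℝ) (h1 : p 1 = 1)
    (hrec : ∀ n : ℕ, 2 ≤ n →
      p n = (1 / ((n : ℝ) - 1)) * ∑ j ∈ Finset.Icc 1 (n - 1), (1 - p j) * p (n - j)) :
    HasSum (fun k : ℕ => p (k + 1) / (((k : ℝ) + 1) * ((k : ℝ) + 2)))
      (∫ x in (0:ℝ)..1, 1 / (1 - Real.log x)) := by
  have hq01 : ∀ k : ℕ, 0 ≤ p (k+1) ∧ p (k+1) ≤ 1 := fun k =>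
    rrt_bounds p h1 hrec (k+1) (by omega)
  -- Summability of the target series
  have hsummand : ∀ k : ℕ, |p (k+1) / (((k:ℝ)+1) * ((k:ℝ)+2))| ≤ 1 / ((k:ℝ)+1)^2 := by
    intro k
    rw [abs_div, abs_of_nonneg (by positivity : (0:ℝ) ≤ ((k:ℝ)+1) * ((k:ℝ)+2))]
    apply div_le_div₀ (by positivity) _ (by positivity) _
    · rw [abs_of_nonneg (hq01 k).1]; exact (hq01 k).2
    · nlinarith [Nat.cast_nonneg (α := ℝ) k]
  have hSsq : Summable (fun n : ℕ => 1 / ((n:ℝ)+1)^2) := by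
    have h := Real.summable_one_div_nat_pow.2 (one_lt_two (α := ℕ))
    have h2 := (_root_.summable_nat_add_iff 1).2 h
    apply h2.congr
    intro n
    push_cast
    ring_nf
  have hsummable : Summable (fun k : ℕ => p (k+1) / (((k:ℝ)+1) * ((k:ℝ)+2))) := by
    apply Summable.of_norm_bounded hSsq
    intro k
    rw [Real.norm_eq_abs]
    exact hsummand k
  -- the series of integrals
  set f : ℕ → ℝ → ℝ := fun k t => p (k+1) * ((1-t) * t^k) with hfdef
  set μ : Measure ℝ := volume.restrict (Set.Ioo (0:ℝ) 1) with hμ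
  have hfcont : ∀ k, Continuous (f k) := fun k =>
    continuous_const.mul ((continuous_const.sub continuous_id).mul (continuous_pow k))
  have hfint : ∀ k, Integrable (f k) μ := by
    intro k
    rw [hμ, ← IntegrableOn]
    exact ((hfcont k).integrableOn_Icc (a := 0) (b := 1)).mono_set Set.Ioo_subset_Icc_self
  have hf_nonneg : ∀ k, ∀ t ∈ Set.Ioo (0:ℝ) 1, 0 ≤ f k t := by
    intro k t ht
    have : (0:ℝ) < 1 - t := by linarith [ht.2]
    exact mul_nonneg (hq01 k).1 (mul_nonneg this.le (pow_nonneg ht.1.le k))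
  have hlin : ∀ k, ∫⁻ t, ‖f k t‖₊ ∂μ = ENNReal.ofReal (∫ t, f k t ∂μ) := by
    intro k
    rw [MeasureTheory.ofReal_integral_eq_lintegral_ofReal (hfint k)
      ((ae_restrict_iff' measurableSet_Ioo).2 (Filter.Eventually.of_forall (hf_nonneg k)))]
    apply lintegral_congr_ae
    filter_upwards [(ae_restrict_iff' measurableSet_Ioo).2
      (Filter.Eventually.of_forall (hf_nonneg k))] with t ht
    exact ((congrArg ENNReal.ofReal (Real.norm_of_nonneg ht)).symm.trans (ofReal_norm _)).symm
  have hintval : ∀ k, ∫ t, f k t ∂μ = p (k+1) / (((k:ℝ)+1) * ((k:ℝ)+2)) := by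
    intro k
    exact rrt_integral p k
  have hlintsum : ∑' k, ∫⁻ t, ‖f k t‖₊ ∂μ ≠ ⊤ := by
    simp_rw [hlin, hintval]
    rw [← ENNReal.ofReal_tsum_of_nonneg (fun k => by
      rw [div_nonneg_iff]; left
      exact ⟨(hq01 k).1, by positivity⟩) hsummable]
    exact ENNReal.ofReal_ne_top
  have hswap := MeasureTheory.integral_tsum
    (fun k => (hfcont k).aestronglyMeasurable) hlintsum
  -- identify the integrand
  have hptwise : ∀ t ∈ Set.Ioo (0:ℝ) 1, ∑' k, f k t = (1 - Real.log (1-t))⁻¹ := by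
    intro t ht
    have hq : ∀ k : ℕ, |p (k+1)| ≤ 1 := fun k =>
      abs_le.2 ⟨by linarith [(hq01 k).1], (hq01 k).2⟩
    have habs : |t| < 1 := by rw [abs_of_pos ht.1]; exact ht.2
    have h2 : ∑' k, f k t = (1-t) * ∑' k, p (k+1) * t^k := by
      rw [← tsum_mul_left]
      apply tsum_congr
      intro k
      simp only [hfdef]
      ring
    rw [h2, rrt_genfun p h1 hrec hq01 t ht]
  have hint_eq : ∫ t, (∑' k, f k t) ∂μ = ∫ x in (0:ℝ)..1, 1 / (1 - Real.log x) := by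
    rw [hμ]
    rw [MeasureTheory.setIntegral_congr_fun measurableSet_Ioo hptwise]
    rw [← MeasureTheory.integral_Ioc_eq_integral_Ioo,
      ← intervalIntegral.integral_of_le zero_le_one]
    have hsub := intervalIntegral.integral_comp_sub_left
      (a := (0:ℝ)) (b := 1) (fun x => (1 - Real.log x)⁻¹) 1
    simp only [sub_zero, sub_self] at hsub
    rw [hsub]
    apply intervalIntegral.integral_congr
    intro x _
    simp [one_div]
  rw [hsummable.hasSum_iff]
  calc ∑' k, p (k+1) / (((k:ℝ)+1) * ((k:ℝ)+2)) = ∑' k, ∫ t, f k t ∂μ := by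
        apply tsum_congr; intro k; rw [hintval k]
    _ = ∫ t, (∑' k, f k t) ∂μ := hswap.symm
    _ = ∫ x in (0:ℝ)..1, 1 / (1 - Real.log x) := hint_eq
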